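/- Assume fewer than 1/3 of validators by weight violate condition I or II. If a is a finalized checkpoint with justified child a' (h(a') = h(a)+1), and b is a justified checkpoint conflicting with a with h(b) > h(a'), then in any justification chain r → b₁ → ⋯ → b_n = b of supermajority links, there exists an index j with h(b_{j-1}) < h(a) and h(b_j) > h(a')—i.e., a supermajority link that 'spans over' the link a → a'. -/

import Mathlib

/-- `a` is an ancestor of `b` in the rooted tree determined by `parent`. -/
def Ancestor {C : Type*} (parent : C → C) (a b : C) : Prop :=
  ∃ k : ℕ, parent^[k] b = a

/-- A checkpoint is justified if it is the root or the target of a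
supermajority link from a justified checkpoint. -/
inductive Justified {C : Type*} (link : C → C → Prop) (root : C) : C → Prop
  | root : Justified link root root
  | step (c' c : C) : Justified link root c' → link c' c → Justified link root c

/-- Assume fewer than 1/3 of validators by weight violate condition I or II.
If `a` is a finalized checkpoint with justified direct child `a'`
(h a' = h a + 1), and `b` is a justified checkpoint conflicting with `a` with
h b > h a', then in any justification chain root = c₀ → c₁ → ⋯ → c_n = b of
supermajority links there is an index j with h (c (j-1)) < h a and
h (c j) > h a', i.e. a supermajority link spanning over the link a → a'. -/
theorem stmt_10 {V C : Type*} [DecidableEq V] [DecidableEq C] [Fintype V]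
    (w : V → ℝ) (hw : ∀ v, 0 ≤ w v)
    (h : C → ℕ)
    (parent : C → C) (root : C)
    (hroot : h root = 0) (hparentroot : parent root = root)
    (hparent : ∀ c, c ≠ root → h c = h (parent c) + 1)
    (votes : Finset (V × C × C))
    (hvotes : ∀ v s t, (v, s, t) ∈ votes → Ancestor parent s t ∧ s ≠ t)
    (W : ℝ) (hW : W = ∑ v, w v) (hWpos : 0 < W)
    (link : C → C → Prop)
    (hlinkdef : ∀ s t, link s t ↔
      (2 / 3 : ℝ) * W ≤ ∑ v ∈ Finset.univ.filter (fun v => (v, s, t) ∈ votes), w v)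
    (slashed : Finset V)
    (hslashed : ∀ v, v ∈ slashed ↔ ∃ s₁ t₁ s₂ t₂ : C,
      (v, s₁, t₁) ∈ votes ∧ (v, s₂, t₂) ∈ votes ∧
      (((s₁, t₁) ≠ (s₂, t₂) ∧ h t₁ = h t₂) ∨
       (h s₁ < h s₂ ∧ h s₂ < h t₂ ∧ h t₂ < h t₁)))
    (hbound : ∑ v ∈ slashed, w v < (1 / 3 : ℝ) * W)
    -- `a` is finalized with justified direct child `a'`
    (a a' : C) (hja : Justified link root a) (hja' : Justified link root a')
    (hlinkaa' : link a a') (hchild : parent a' = a) (hha' : h a' = h a + 1)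
    -- `b` is justified, conflicts with `a`, and h b > h a'
    (b : C) (hjb : Justified link root b)
    (hconflict : ¬ Ancestor parent a b ∧ ¬ Ancestor parent b a)
    (hhb : h a' < h b)
    -- a justification chain from the root to `b`
    (n : ℕ) (c : ℕ → C)
    (hc0 : c 0 = root) (hcn : c n = b)
    (hchain : ∀ i < n, link (c i) (c (i + 1))) :
    ∃ j, 1 ≤ j ∧ j ≤ n ∧ h (c (j - 1)) < h a ∧ h a' < h (c j) := by
  classical
  -- every supermajority link has at least one voter
  have hvoter : ∀ s t, link s t → ∃ v, (v, s, t) ∈ votes := by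
    intro s t hl
    by_contra hne
    push_neg at hne
    rw [hlinkdef] at hl
    have hempty : (Finset.univ.filter (fun v => (v, s, t) ∈ votes)) = ∅ := by
      ext v; simp [hne v]
    rw [hempty, Finset.sum_empty] at hl
    nlinarith
  have hancl : ∀ s t, link s t → Ancestor parent s t := by
    intro s t hl
    obtain ⟨v, hv⟩ := hvoter s t hl
    exact (hvotes v s t hv).1
  have hzero : ∀ x, h x = 0 → x = root := by
    intro x hx
    by_contra hne
    have := hparent x hne
    omega
  -- uniqueness of justified checkpoints at a given height
  have huniq : ∀ x y, Justified link root x → Justified link root y → h x = h y → x = y := by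
    intro x y hx hy hxy
    by_contra hne
    have hget : ∀ z, Justified link root z → z = root ∨ ∃ s, link s z := by
      intro z hz
      cases hz with
      | root => exact Or.inl rfl
      | step s z hs hl => exact Or.inr ⟨s, hl⟩
    rcases hget x hx with rfl | ⟨s₁, hl₁⟩
    · exact hne (hzero y (by omega)).symm
    rcases hget y hy with rfl | ⟨s₂, hl₂⟩
    · exact hne (hzero x (by omega))
    set A := Finset.univ.filter (fun v => (v, s₁, x) ∈ votes) with hAdef
    set B := Finset.univ.filter (fun v => (v, s₂, y) ∈ votes) with hBdef
    have hA : (2 / 3 : ℝ) * W ≤ ∑ v ∈ A, w v := (hlinkdef _ _).mp hl₁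
    have hB : (2 / 3 : ℝ) * W ≤ ∑ v ∈ B, w v := (hlinkdef _ _).mp hl₂
    have hsub : A ∩ B ⊆ slashed := by
      intro v hv
      rw [Finset.mem_inter, hAdef, hBdef, Finset.mem_filter, Finset.mem_filter] at hv
      rw [hslashed]
      refine ⟨s₁, x, s₂, y, hv.1.2, hv.2.2, Or.inl ⟨?_, hxy⟩⟩
      intro hq
      injection hq with h1 h2
      exact hne h2
    have hunion : ∑ v ∈ A ∪ B, w v ≤ W := by
      rw [hW]
      exact Finset.sum_le_sum_of_subset_of_nonneg (Finset.subset_univ _)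
        (fun v _ _ => hw v)
    have hIE : ∑ v ∈ A ∪ B, w v + ∑ v ∈ A ∩ B, w v = ∑ v ∈ A, w v + ∑ v ∈ B, w v :=
      Finset.sum_union_inter
    have hslash_le : ∑ v ∈ A ∩ B, w v ≤ ∑ v ∈ slashed, w v :=
      Finset.sum_le_sum_of_subset_of_nonneg hsub (fun v _ _ => hw v)
    linarith
  -- every checkpoint in the chain is justified
  have hcj : ∀ i, i ≤ n → Justified link root (c i) := by
    intro i
    induction i with
    | zero => intro _; rw [hc0]; exact Justified.root
    | succ k ih =>
      intro hk
      exact Justified.step _ _ (ih (by omega)) (hchain k (by omega))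
  -- every checkpoint in the chain is an ancestor of b
  have hcb' : ∀ m, m ≤ n → Ancestor parent (c (n - m)) b := by
    intro m
    induction m with
    | zero => intro _; rw [Nat.sub_zero, hcn]; exact ⟨0, rfl⟩
    | succ k ih =>
      intro hk
      have hlk : link (c (n - (k + 1))) (c (n - (k + 1) + 1)) :=
        hchain _ (by omega)
      have heq : n - (k + 1) + 1 = n - k := by omega
      rw [heq] at hlk
      obtain ⟨k1, hk1⟩ := hancl _ _ hlk
      obtain ⟨k2, hk2⟩ := ih (by omega)
      exact ⟨k1 + k2, by rw [Function.iterate_add_apply, hk2, hk1]⟩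
  have hcb : ∀ i, i ≤ n → Ancestor parent (c i) b := by
    intro i hi
    have : n - (n - i) = i := by omega
    rw [← this]
    exact hcb' (n - i) (by omega)
  -- if some chain checkpoint is a, or a', then a is an ancestor of b: contradiction
  have hnota : ∀ i, i ≤ n → c i ≠ a := by
    intro i hi heq
    obtain ⟨k, hk⟩ := hcb i hi
    rw [heq] at hk
    exact hconflict.1 ⟨k, hk⟩
  have hnota' : ∀ i, i ≤ n → c i ≠ a' := by
    intro i hi heq
    obtain ⟨k, hk⟩ := hcb i hi
    rw [heq] at hk
    exact hconflict.1 ⟨k + 1, by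
      rw [Function.iterate_succ_apply', hk, hchild]⟩
  -- find the minimal j with h (c j) > h a'
  have hPn : n ≤ n ∧ h a' < h (c n) := ⟨le_refl n, by rw [hcn]; exact hhb⟩
  have hex : ∃ j, j ≤ n ∧ h a' < h (c j) := ⟨n, hPn⟩
  set j := Nat.find hex with hjdef
  have hj : j ≤ n ∧ h a' < h (c j) := Nat.find_spec hex
  have hj1 : 1 ≤ j := by
    rcases Nat.eq_zero_or_pos j with h0 | h1
    · exfalso
      have := hj.2
      rw [h0, hc0, hroot] at this
      omega
    · exact h1
  have hmin : ¬ (j - 1 ≤ n ∧ h a' < h (c (j - 1))) := Nat.find_min hex (by omega)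
  have hle : h (c (j - 1)) ≤ h a' := by
    by_contra hgt
    exact hmin ⟨by omega, by omega⟩
  have hja'' : Justified link root (c (j - 1)) := hcj (j - 1) (by omega)
  -- exclude h (c (j-1)) = h a' and = h a
  have hne1 : h (c (j - 1)) ≠ h a' := by
    intro heq
    exact hnota' (j - 1) (by omega) (huniq _ _ hja'' hja' heq)
  have hne2 : h (c (j - 1)) ≠ h a := by
    intro heq
    exact hnota (j - 1) (by omega) (huniq _ _ hja'' hja heq)
  exact ⟨j, hj1, hj.1, by omega, hj.2⟩
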